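/- Every locally Lipschitz pseudoconvex function on a convex set is quasiconvex. -/

import Mathlib

open scoped RealInnerProductSpace

/-- The Clarke generalized directional derivative of `f` at `x` in direction `d`. -/
noncomputable def clarkeDirDeriv {m : ℕ} (f : EuclideanSpace ℝ (Fin m) → ℝ)
    (x d : EuclideanSpace ℝ (Fin m)) : ℝ :=
  Filter.limsup (fun p : EuclideanSpace ℝ (Fin m) × ℝ => (f (p.1 + p.2 • d) - f p.1) / p.2)
    ((nhds x) ×ˢ (nhdsWithin 0 (Set.Ioi 0)))

/-- The Clarke subdifferential of `f` at `x`. -/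
def clarkeSubdiff {m : ℕ} (f : EuclideanSpace ℝ (Fin m) → ℝ)
    (x : EuclideanSpace ℝ (Fin m)) : Set (EuclideanSpace ℝ (Fin m)) :=
  {g | ∀ d, ⟪g, d⟫ ≤ clarkeDirDeriv f x d}

section ClarkeAux
open Filter Topology Set
variable {m : ℕ}

private noncomputable def quo (f : EuclideanSpace ℝ (Fin m) → ℝ) (d : EuclideanSpace ℝ (Fin m))
    (p : EuclideanSpace ℝ (Fin m) × ℝ) : ℝ := (f (p.1 + p.2 • d) - f p.1) / p.2

private lemma quo_bound (f : EuclideanSpace ℝ (Fin m) → ℝ) (hf : LocallyLipschitz f)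
    (x d : EuclideanSpace ℝ (Fin m)) :
    ∃ C : ℝ, 0 ≤ C ∧ ∀ᶠ p in 𝓝 x ×ˢ 𝓝[>] (0:ℝ), |quo f d p| ≤ C := by
  obtain ⟨K, t, ht, hK⟩ := hf x
  obtain ⟨ε, hε, hball⟩ := Metric.mem_nhds_iff.1 ht
  refine ⟨K * ‖d‖, by positivity, ?_⟩
  have h1 : ∀ᶠ u in 𝓝 x, u ∈ Metric.ball x (ε/2) :=
    eventually_of_mem (Metric.ball_mem_nhds x (by linarith)) (fun u hu => hu)
  have h2 : ∀ᶠ s in 𝓝[>] (0:ℝ), s ∈ Set.Ioo 0 (ε/(2*(‖d‖+1))) :=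
    eventually_of_mem (Ioo_mem_nhdsGT_of_mem ⟨le_rfl, by positivity⟩) (fun s hs => hs)
  filter_upwards [h1.prod_mk h2] with p hp
  obtain ⟨hu, hs⟩ := hp
  set u := p.1; set s := p.2
  have hdpos : (0:ℝ) < ‖d‖ + 1 := by positivity
  have hs0 : 0 < s := hs.1
  have hsd : s * ‖d‖ < ε/2 := by
    have := hs.2
    have h3 : s * ‖d‖ ≤ s * (‖d‖ + 1) := by nlinarith
    have h4 : s * (‖d‖ + 1) < ε/2 := by
      rw [div_mul_eq_div_div] at this
      calc s * (‖d‖+1) < (ε/2/(‖d‖+1)) * (‖d‖+1) := by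
            exact mul_lt_mul_of_pos_right this hdpos
        _ = ε/2 := by field_simp
    linarith
  have hu1 : u ∈ t := hball (by simp only [Metric.mem_ball] at hu ⊢; linarith [hu])
  have hu2 : u + s • d ∈ t := by
    apply hball
    have : dist (u + s • d) x ≤ dist (u + s • d) u + dist u x := dist_triangle _ _ _
    have hd2 : dist (u + s • d) u = s * ‖d‖ := by
      rw [dist_eq_norm]
      simp [norm_smul, abs_of_pos hs0]
    rw [Metric.mem_ball] at hu ⊢
    linarith
  have hlip : |f (u + s • d) - f u| ≤ (K:ℝ) * (s * ‖d‖) := by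
    have := hK.dist_le_mul _ hu2 _ hu1
    rw [Real.dist_eq, dist_eq_norm] at this
    calc |f (u + s • d) - f u| ≤ (K:ℝ) * ‖u + s • d - u‖ := this
      _ = (K:ℝ) * (s * ‖d‖) := by rw [show u + s • d - u = s • d by abel, norm_smul,
            Real.norm_eq_abs, abs_of_pos hs0]
  show |(f (u + s • d) - f u) / s| ≤ (K:ℝ) * ‖d‖
  rw [abs_div, abs_of_pos hs0, div_le_iff₀ hs0]
  calc |f (u + s • d) - f u| ≤ (K:ℝ) * (s * ‖d‖) := hlip
    _ = (K:ℝ) * ‖d‖ * s := by ring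
private lemma cdd_eq (f : EuclideanSpace ℝ (Fin m) → ℝ) (x d : EuclideanSpace ℝ (Fin m)) :
    clarkeDirDeriv f x d = limsup (quo f d) (𝓝 x ×ˢ 𝓝[>] (0:ℝ)) := rfl

private lemma bddUnder (f : EuclideanSpace ℝ (Fin m) → ℝ) (hf : LocallyLipschitz f)
    (x d : EuclideanSpace ℝ (Fin m)) :
    (𝓝 x ×ˢ 𝓝[>] (0:ℝ)).IsBoundedUnder (· ≤ ·) (quo f d) ∧
    (𝓝 x ×ˢ 𝓝[>] (0:ℝ)).IsBoundedUnder (· ≥ ·) (quo f d) := by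
  obtain ⟨C, _, hC⟩ := quo_bound f hf x d
  exact ⟨⟨C, eventually_map.2 (hC.mono fun p hp => (abs_le.1 hp).2)⟩,
    ⟨-C, eventually_map.2 (hC.mono fun p hp => (abs_le.1 hp).1)⟩⟩

private lemma cobddUnder (f : EuclideanSpace ℝ (Fin m) → ℝ) (hf : LocallyLipschitz f)
    (x d : EuclideanSpace ℝ (Fin m)) :
    (𝓝 x ×ˢ 𝓝[>] (0:ℝ)).IsCoboundedUnder (· ≤ ·) (quo f d) :=
  (bddUnder f hf x d).2.isCoboundedUnder_le

private lemma cdd_subadd (f : EuclideanSpace ℝ (Fin m) → ℝ) (hf : LocallyLipschitz f)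
    (x d₁ d₂ : EuclideanSpace ℝ (Fin m)) :
    clarkeDirDeriv f x (d₁ + d₂) ≤ clarkeDirDeriv f x d₁ + clarkeDirDeriv f x d₂ := by
  set F := 𝓝 x ×ˢ 𝓝[>] (0:ℝ) with hF
  set φ : EuclideanSpace ℝ (Fin m) × ℝ → EuclideanSpace ℝ (Fin m) × ℝ :=
    fun p => (p.1 + p.2 • d₁, p.2) with hφdef
  have hφ : Tendsto φ F F := by
    apply Tendsto.prodMk
    · have h1 : Tendsto (fun p : EuclideanSpace ℝ (Fin m) × ℝ => p.1 + p.2 • d₁) F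
          (𝓝 (x + (0:ℝ) • d₁)) :=
        (tendsto_fst).add ((tendsto_snd.mono_right nhdsWithin_le_nhds).smul_const d₁)
      simpa using h1
    · exact tendsto_snd
  have hq : ∀ p : EuclideanSpace ℝ (Fin m) × ℝ,
      quo f (d₁ + d₂) p = (fun p => quo f d₂ (φ p)) p + quo f d₁ p := by
    intro p
    simp only [quo, hφdef]
    rw [← add_div]
    congr 1
    rw [sub_add_sub_cancel, smul_add, add_assoc]
  have hb2φ : F.IsBoundedUnder (· ≤ ·) (fun p => quo f d₂ (φ p)) ∧
      F.IsBoundedUnder (· ≥ ·) (fun p => quo f d₂ (φ p)) := by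
    obtain ⟨C, _, hC⟩ := quo_bound f hf x d₂
    have h := hφ.eventually hC
    exact ⟨⟨C, eventually_map.2 (h.mono fun p hp => (abs_le.1 hp).2)⟩,
      ⟨-C, eventually_map.2 (h.mono fun p hp => (abs_le.1 hp).1)⟩⟩
  rw [cdd_eq, cdd_eq, cdd_eq, ← hF]
  calc limsup (quo f (d₁ + d₂)) F
      = limsup ((fun p => quo f d₂ (φ p)) + quo f d₁) F := by
        apply limsup_congr
        filter_upwards with p using hq p
    _ ≤ limsup (fun p => quo f d₂ (φ p)) F + limsup (quo f d₁) F := by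
        refine limsup_add_le hb2φ.2 hb2φ.1 (cobddUnder f hf x d₁) (bddUnder f hf x d₁).1
    _ ≤ limsup (quo f d₂) F + limsup (quo f d₁) F := by
        have hmapeq : limsup (quo f d₂) (Filter.map φ F) =
            limsup (fun p => quo f d₂ (φ p)) F := by
          rw [Filter.limsup, Filter.limsup, Filter.map_map]; rfl
        have hmb : (Filter.map φ F).IsBoundedUnder (· ≥ ·) (quo f d₂) := by
          rw [IsBoundedUnder, Filter.map_map]; exact hb2φ.2
        haveI : (Filter.map φ F).NeBot := Filter.map_neBot
        have hco := hmb.isCoboundedUnder_le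
        have hle := limsup_le_limsup_of_le hφ hco (bddUnder f hf x d₂).1
        rw [hmapeq] at hle
        exact add_le_add hle le_rfl
    _ = limsup (quo f d₁) F + limsup (quo f d₂) F := add_comm _ _

private lemma map_mul_nhdsWithin_Ioi (c : ℝ) (hc : 0 < c) :
    Filter.map (fun t : ℝ => c * t) (𝓝[>] (0:ℝ)) = 𝓝[>] (0:ℝ) := by
  have key : ∀ a : ℝ, 0 < a → Tendsto (fun t : ℝ => a * t) (𝓝[>] (0:ℝ)) (𝓝[>] (0:ℝ)) := by
    intro a ha
    apply tendsto_nhdsWithin_of_tendsto_nhds_of_eventually_within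
    · have : Tendsto (fun t : ℝ => a * t) (𝓝 0) (𝓝 (a * 0)) :=
        (continuous_const.mul continuous_id).tendsto 0
      simpa using this.mono_left nhdsWithin_le_nhds
    · exact eventually_mem_nhdsWithin.mono fun t ht => mul_pos ha ht
  refine le_antisymm (key c hc) ?_
  have : 𝓝[>] (0:ℝ) = Filter.map (fun t : ℝ => c * t)
      (Filter.map (fun t : ℝ => c⁻¹ * t) (𝓝[>] (0:ℝ))) := by
    rw [Filter.map_map]
    have : ((fun t : ℝ => c * t) ∘ fun t : ℝ => c⁻¹ * t) = id := by
      funext t; simp [← mul_assoc, mul_inv_cancel₀ hc.ne']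
    rw [this, Filter.map_id]
  conv_lhs => rw [this]
  exact Filter.map_mono (key c⁻¹ (inv_pos.2 hc))

private lemma cdd_smul (f : EuclideanSpace ℝ (Fin m) → ℝ) (hf : LocallyLipschitz f)
    (x d : EuclideanSpace ℝ (Fin m)) (c : ℝ) (hc : 0 < c) :
    clarkeDirDeriv f x (c • d) = c * clarkeDirDeriv f x d := by
  set F := 𝓝 x ×ˢ 𝓝[>] (0:ℝ) with hFdef
  set ψ : EuclideanSpace ℝ (Fin m) × ℝ → EuclideanSpace ℝ (Fin m) × ℝ :=
    fun p => (p.1, c * p.2) with hψdef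
  have hmapψ : Filter.map ψ F = F := by
    have h : ψ = Prod.map id (fun t : ℝ => c * t) := rfl
    rw [hFdef, h, ← Filter.prod_map_right, map_mul_nhdsWithin_Ioi c hc]
  have hq : ∀ᶠ p in F, quo f (c • d) p = c * quo f d (ψ p) := by
    have h2 : ∀ᶠ p : EuclideanSpace ℝ (Fin m) × ℝ in F, p.2 ∈ Set.Ioi (0:ℝ) :=
      (eventually_mem_nhdsWithin (a := (0:ℝ)) (s := Set.Ioi 0)).prod_inr (𝓝 x)
    filter_upwards [h2] with p hp
    have hp0 : p.2 ≠ 0 := ne_of_gt hp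
    simp only [quo, hψdef]
    rw [show (c * p.2) • d = p.2 • (c • d) by rw [smul_smul, mul_comm]]
    field_simp
  have hb : F.IsBoundedUnder (· ≤ ·) (fun p => quo f d (ψ p)) ∧
      F.IsBoundedUnder (· ≥ ·) (fun p => quo f d (ψ p)) := by
    constructor <;>
    · show ((Filter.map (fun p => quo f d (ψ p)) F).IsBounded _)
      rw [show (fun p => quo f d (ψ p)) = (quo f d) ∘ ψ from rfl, ← Filter.map_map, hmapψ]
      first
        | exact (bddUnder f hf x d).1
        | exact (bddUnder f hf x d).2
  have hgb : F.IsBoundedUnder (· ≤ ·) (fun p => c * quo f d (ψ p)) := by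
    obtain ⟨b, hb'⟩ := hb.1
    refine ⟨c * b, ?_⟩
    rw [eventually_map] at hb' ⊢
    exact hb'.mono fun p h => mul_le_mul_of_nonneg_left h hc.le
  have hgb' : F.IsBoundedUnder (· ≥ ·) (fun p => c * quo f d (ψ p)) := by
    obtain ⟨b, hb'⟩ := hb.2
    refine ⟨c * b, ?_⟩
    rw [eventually_map] at hb' ⊢
    exact hb'.mono fun p h => mul_le_mul_of_nonneg_left h hc.le
  have heq := (OrderIso.mulLeft₀ c hc).limsup_apply (f := F)
    (u := fun p => quo f d (ψ p)) hb.1 hb.2.isCoboundedUnder_le hgb hgb'.isCoboundedUnder_le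
  simp only [OrderIso.mulLeft₀_apply] at heq
  rw [cdd_eq, cdd_eq, limsup_congr hq, ← heq]
  congr 1
  rw [Filter.limsup, Filter.limsup,
    show (fun p => quo f d (ψ p)) = (quo f d) ∘ ψ from rfl, ← Filter.map_map, hmapψ]

private lemma clarkeSubdiff_nonempty (f : EuclideanSpace ℝ (Fin m) → ℝ)
    (hf : LocallyLipschitz f) (x : EuclideanSpace ℝ (Fin m)) :
    ∃ g, g ∈ clarkeSubdiff f x := by
  have N_hom : ∀ c : ℝ, 0 < c → ∀ d, clarkeDirDeriv f x (c • d) = c * clarkeDirDeriv f x d :=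
    fun c hc d => cdd_smul f hf x d c hc
  have N_add : ∀ d₁ d₂, clarkeDirDeriv f x (d₁ + d₂) ≤ clarkeDirDeriv f x d₁ + clarkeDirDeriv f x d₂ :=
    fun a b => cdd_subadd f hf x a b
  have hN0 : 0 ≤ clarkeDirDeriv f x 0 := by
    have := N_add 0 0; rw [add_zero] at this; linarith
  have hdom : ∀ p : ((0 : EuclideanSpace ℝ (Fin m) →ₗ[ℝ] ℝ).toPMap ⊥).domain,
      ((0 : EuclideanSpace ℝ (Fin m) →ₗ[ℝ] ℝ).toPMap ⊥) p ≤ clarkeDirDeriv f x p := by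
    rintro ⟨z, hz⟩
    replace hz : z = 0 := (Submodule.mem_bot ℝ).1 hz
    subst hz
    simpa using hN0
  obtain ⟨g, -, hg⟩ := exists_extension_of_le_sublinear
    ((0 : EuclideanSpace ℝ (Fin m) →ₗ[ℝ] ℝ).toPMap ⊥) (clarkeDirDeriv f x) N_hom N_add hdom
  refine ⟨(InnerProductSpace.toDual ℝ _).symm (LinearMap.toContinuousLinearMap g),
    fun d => ?_⟩
  rw [InnerProductSpace.toDual_symm_apply]
  exact hg d

end ClarkeAux

/-- Every locally Lipschitz pseudoconvex function on a convex set is quasiconvex: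
`f (λ x + (1-λ) y) ≤ max (f x) (f y)`. -/
theorem pseudoconvex_is_quasiconvex {m : ℕ}
    (f : EuclideanSpace ℝ (Fin m) → ℝ) (hf : LocallyLipschitz f)
    (D : Set (EuclideanSpace ℝ (Fin m))) (hDconv : Convex ℝ D)
    (hpseudo : ∀ x ∈ D, ∀ y ∈ D, ∀ g ∈ clarkeSubdiff f x, f x > f y → ⟪g, y - x⟫ < 0) :
    ∀ x ∈ D, ∀ y ∈ D, ∀ lam : ℝ, lam ∈ Set.Icc (0 : ℝ) 1 →
      f (lam • x + (1 - lam) • y) ≤ max (f x) (f y) := by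
  intro x hx y hy lam hlam
  by_contra hcon
  push_neg at hcon
  rw [max_lt_iff] at hcon
  obtain ⟨hfx, hfy⟩ := hcon
  set z := lam • x + (1 - lam) • y with hz
  have hlam0 : 0 < lam := by
    rcases lt_or_eq_of_le hlam.1 with h | h
    · exact h
    · exfalso; rw [← h] at hz; simp at hz; rw [hz] at hfy; exact lt_irrefl _ hfy
  have hlam1 : lam < 1 := by
    rcases lt_or_eq_of_le hlam.2 with h | h
    · exact h
    · exfalso; rw [h] at hz; simp at hz; rw [hz] at hfx; exact lt_irrefl _ hfx
  have hzD : z ∈ D := hDconv hx hy hlam.1 (by linarith) (by ring)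
  obtain ⟨g, hg⟩ := clarkeSubdiff_nonempty f hf z
  have h1 : ⟪g, x - z⟫ < 0 := hpseudo z hzD x hx g hg hfx
  have h2 : ⟪g, y - z⟫ < 0 := hpseudo z hzD y hy g hg hfy
  have e1 : x - z = (1 - lam) • (x - y) := by rw [hz]; module
  have e2 : y - z = (-lam) • (x - y) := by rw [hz]; module
  rw [e1, real_inner_smul_right] at h1
  rw [e2, real_inner_smul_right] at h2
  nlinarith
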